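/- arXiv:2507.12438 — 4 statements merged into one kernel-verified Lean document; each statement's English description precedes it below -/
import Mathlib

section
/- Let s, L ≥ 1 with L ≥ s + 1, let ω_1, …, ω_s ∈ ℝ be such that e^{−i ω_1}, …, e^{−i ω_s} are pairwise distinct, and let c_1, …, c_s ∈ ℂ be all nonzero. Define x_j = Σ_{k=1}^s c_k e^{−i ω_k j} for j ∈ ℕ and the L×L Hankel matrix W by W_{pq} = x_{p+q} for p, q ∈ {0, …, L−1}. Then the column space of W equals the linear span of the steering vectors a_L(ω_1), …, a_L(ω_s), and for every ω ∈ ℝ the steering vector a_L(ω) belongs to the column space of W if and only if e^{−i ω} = e^{−i ω_k} for some k ∈ {1, …, s}. -/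
open Matrix

/-- Steering vector `a_n(ω) ∈ ℂ^n`, `(a_n(ω))_j = e^{−iωj}`. -/
noncomputable def steer (n : ℕ) (ω : ℝ) : Fin n → ℂ :=
  fun j => Complex.exp (-Complex.I * ω * (j : ℕ))

lemma steer_apply (L : ℕ) (θ : ℝ) (j : Fin L) :
    steer L θ j = Complex.exp (-Complex.I * θ) ^ (j : ℕ) := by
  rw [steer, ← Complex.exp_nat_mul]
  ring_nf

/-- **Exactness of MUSIC in the noiseless setting.**
For `L ≥ s + 1`, pairwise distinct nodes `e^{−i ω_k}` and nonzero amplitudes,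
the column space of the Hankel matrix `W_{pq} = x_{p+q}` of the signal
`x_j = Σ_k c_k e^{−i ω_k j}` equals the span of the steering vectors
`a_L(ω_1), …, a_L(ω_s)`, and `a_L(ω)` lies in this column space iff
`e^{−iω} = e^{−iω_k}` for some `k`. -/
theorem music_exactness
    (s L : ℕ) (hs : 1 ≤ s) (hL : s + 1 ≤ L)
    (ω : Fin s → ℝ)
    (hdist : Function.Injective fun k : Fin s => Complex.exp (-Complex.I * (ω k)))
    (c : Fin s → ℂ) (hc : ∀ k, c k ≠ 0)
    (x : ℕ → ℂ) (hx : ∀ j : ℕ, x j = ∑ k, c k * Complex.exp (-Complex.I * (ω k) * (j : ℕ)))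
    (W : Matrix (Fin L) (Fin L) ℂ) (hW : ∀ p q : Fin L, W p q = x ((p : ℕ) + (q : ℕ))) :
    LinearMap.range W.mulVecLin
        = Submodule.span ℂ (Set.range fun k : Fin s => steer L (ω k)) ∧
      ∀ ϑ : ℝ, steer L ϑ ∈ LinearMap.range W.mulVecLin ↔
        ∃ k : Fin s, Complex.exp (-Complex.I * ϑ) = Complex.exp (-Complex.I * (ω k)) := by
  classical
  set z : Fin s → ℂ := fun k => Complex.exp (-Complex.I * (ω k)) with hz
  have hzk : ∀ k : Fin s, Complex.exp (-Complex.I * (ω k)) = z k := fun _ => rfl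
  have hzpow : ∀ (k : Fin s) (j : ℕ), Complex.exp (-Complex.I * (ω k) * (j : ℕ)) = z k ^ j := by
    intro k j
    rw [← Complex.exp_nat_mul]
    ring_nf
  -- key computation: W.mulVec u as a combination of powers of the nodes
  have hmul : ∀ u : Fin L → ℂ, ∀ p : Fin L,
      W.mulVec u p = ∑ k, (c k * ∑ q : Fin L, z k ^ (q : ℕ) * u q) * z k ^ (p : ℕ) := by
    intro u p
    simp only [mulVec, dotProduct, hW, hx, Finset.sum_mul]
    rw [Finset.sum_comm]
    refine Finset.sum_congr rfl fun k _ => ?_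
    rw [Finset.mul_sum, Finset.sum_mul]
    refine Finset.sum_congr rfl fun q _ => ?_
    rw [Nat.cast_add, mul_add, Complex.exp_add, hzpow, hzpow]
    ring
  have hvdet : (Matrix.vandermonde z).det ≠ 0 :=
    Matrix.det_vandermonde_ne_zero_iff.mpr hdist
  -- main equality of submodules
  have key : LinearMap.range W.mulVecLin
      = Submodule.span ℂ (Set.range fun k : Fin s => steer L (ω k)) := by
    apply le_antisymm
    · rintro y ⟨u, rfl⟩
      rw [Submodule.mem_span_range_iff_exists_fun]
      refine ⟨fun k => c k * ∑ q : Fin L, z k ^ (q : ℕ) * u q, ?_⟩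
      funext p
      rw [Finset.sum_apply]
      show _ = W.mulVec u p
      rw [hmul u p]
      refine Finset.sum_congr rfl fun k _ => ?_
      simp only [Pi.smul_apply, steer_apply, smul_eq_mul]
      rfl
    · rw [Submodule.span_le]
      rintro _ ⟨k, rfl⟩
      have hvsur : Function.Surjective (Matrix.vandermonde z).mulVec :=
        Matrix.mulVec_surjective_iff_isUnit.2
          ((Matrix.isUnit_iff_isUnit_det _).2 (isUnit_iff_ne_zero.2 hvdet))
      obtain ⟨w, hw⟩ := hvsur (fun m => (if m = k then 1 else 0) / c m)
      have hsum : ∀ m : Fin s,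
          ∑ q : Fin L, z m ^ (q : ℕ) * (if h : (q : ℕ) < s then w ⟨q, h⟩ else 0)
            = ∑ j : Fin s, z m ^ (j : ℕ) * w j := by
        intro m
        have h2 : ∑ j : Fin s, z m ^ (j : ℕ) * w j
            = ∑ j : Fin s, z m ^ (j : ℕ) * (if h : (j : ℕ) < s then w ⟨j, h⟩ else 0) := by
          refine Finset.sum_congr rfl fun j _ => ?_
          rw [dif_pos j.isLt]
        rw [h2, Fin.sum_univ_eq_sum_range
            (fun n => z m ^ n * (if h : n < s then w ⟨n, h⟩ else 0)) L,
          Fin.sum_univ_eq_sum_range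
            (fun n => z m ^ n * (if h : n < s then w ⟨n, h⟩ else 0)) s]
        refine (Finset.sum_subset (Finset.range_subset_range.2 (le_of_lt (Nat.lt_of_lt_of_le
          (Nat.lt_succ_self s) hL))) fun q hqL hqs => ?_).symm
        rw [Finset.mem_range] at hqs
        simp [hqs]
      refine ⟨fun q => if h : (q : ℕ) < s then w ⟨q, h⟩ else 0, ?_⟩
      funext p
      show W.mulVec _ p = steer L (ω k) p
      rw [hmul _ p, steer_apply]
      have hcoef : ∀ m : Fin s,
          c m * (∑ q : Fin L, z m ^ (q : ℕ) * (if h : (q : ℕ) < s then w ⟨q, h⟩ else 0))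
            = if m = k then 1 else 0 := by
        intro m
        rw [hsum m]
        have hwm := congrFun hw m
        rw [Matrix.mulVec, dotProduct] at hwm
        simp only [Matrix.vandermonde_apply] at hwm
        rw [hwm, mul_div_cancel₀ _ (hc m)]
      calc (∑ m, (c m * ∑ q : Fin L, z m ^ (q : ℕ) *
              (if h : (q : ℕ) < s then w ⟨q, h⟩ else 0)) * z m ^ (p : ℕ))
          = ∑ m, (if m = k then 1 else 0) * z m ^ (p : ℕ) := by
            exact Finset.sum_congr rfl fun m _ => by rw [hcoef m]
        _ = z k ^ (p : ℕ) := by simp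
        _ = _ := rfl
  refine ⟨key, fun ϑ => ?_⟩
  rw [key]
  constructor
  · intro hmem
    by_contra hne
    push_neg at hne
    rw [Submodule.mem_span_range_iff_exists_fun] at hmem
    obtain ⟨d, hd⟩ := hmem
    set zθ : ℂ := Complex.exp (-Complex.I * ϑ) with hzθ
    have hz' : Function.Injective (Fin.cons zθ z : Fin (s + 1) → ℂ) :=
      Fin.cons_injective_of_injective (by rintro ⟨k, hk⟩; exact hne k hk.symm) hdist
    have hp : ∀ p : Fin L, ∑ k, d k * z k ^ (p : ℕ) = zθ ^ (p : ℕ) := by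
      intro p
      have h := congrFun hd p
      rw [Finset.sum_apply] at h
      simp only [Pi.smul_apply, steer_apply, smul_eq_mul] at h
      exact h
    have hzero : (Fin.cons (-1 : ℂ) d : Fin (s + 1) → ℂ) = 0 := by
      apply Matrix.eq_zero_of_forall_pow_sum_mul_pow_eq_zero hz'
      intro i
      have hip : ∑ k, d k * z k ^ (i : ℕ) = zθ ^ (i : ℕ) := hp (Fin.castLE hL i)
      rw [Fin.sum_univ_succ]
      simp only [Fin.cons_zero, Fin.cons_succ]
      rw [hip]
      ring
    have h0 := congrFun hzero 0
    simp at h0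
  · rintro ⟨k, hk⟩
    have hsteq : steer L ϑ = steer L (ω k) := by
      funext j
      rw [steer_apply, steer_apply, hk]
    rw [hsteq]
    exact Submodule.subset_span ⟨k, rfl⟩
end

section
/- Let V be a finite-dimensional complex inner product space, let A : V → V be a self-adjoint linear operator, let ψ ∈ V, let τ ∈ ℝ, and let L ≥ 1. Define the L×L Hankel matrix W by W_{pq} = ⟨ψ, exp(−i (p+q) τ A) ψ⟩ for p, q ∈ {0, …, L−1}. Then rank(W) is at most the number of distinct eigenvalues E of A for which the orthogonal projection of ψ onto the eigenspace of E is nonzero. -/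
open Matrix
open scoped InnerProductSpace

lemma exp_apply_eigenvector' {V : Type*} [NormedAddCommGroup V] [NormedSpace ℂ V]
    [CompleteSpace V] (B : V →L[ℂ] V) (μ : ℂ) (x : V) (hx : B x = μ • x) :
    NormedSpace.exp B x = Complex.exp μ • x := by
  have hpow : ∀ n : ℕ, (B ^ n) x = μ ^ n • x := by
    intro n; induction n with
    | zero => simp
    | succ n ih =>
      rw [pow_succ, ContinuousLinearMap.mul_apply, hx, _root_.map_smul, ih, smul_smul, ← pow_succ']
  have hsum : Summable fun n : ℕ => ((Nat.factorial n : ℂ))⁻¹ • B ^ n :=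
    NormedSpace.expSeries_summable' (𝕂 := ℂ) B
  have h1 : NormedSpace.exp B x = ∑' n : ℕ, ((Nat.factorial n : ℂ))⁻¹ • (B ^ n) x := by
    rw [NormedSpace.exp_eq_tsum (𝕂 := ℂ)]
    exact ((ContinuousLinearMap.apply ℂ V x).map_tsum hsum)
  rw [h1]
  have h2 : ∀ n : ℕ, ((Nat.factorial n : ℂ))⁻¹ • (B ^ n) x
      = (((Nat.factorial n : ℂ))⁻¹ * μ ^ n) • x := by
    intro n; rw [hpow, smul_smul]
  simp_rw [h2]
  rw [Summable.tsum_smul_const ?_]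
  · congr 1
    rw [Complex.exp_eq_exp_ℂ, NormedSpace.exp_eq_tsum (𝕂 := ℂ)]
    simp [smul_eq_mul]
  · simpa [smul_eq_mul] using NormedSpace.expSeries_summable' (𝕂 := ℂ) μ

lemma my_rank_add_le {m : Type*} [Fintype m] (A B : Matrix m m ℂ) :
    (A + B).rank ≤ A.rank + B.rank := by
  rw [Matrix.rank, Matrix.rank, Matrix.rank, Matrix.mulVecLin_add]
  refine le_trans (Submodule.finrank_mono ?_) (Submodule.finrank_add_le_finrank_add_finrank _ _)
  rintro y ⟨x, rfl⟩
  exact Submodule.add_mem_sup (LinearMap.mem_range_self _ x) (LinearMap.mem_range_self _ x)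

lemma my_rank_vecMulVec {m : Type*} [Fintype m] (w v : m → ℂ) :
    (Matrix.vecMulVec w v).rank ≤ 1 := by
  rw [Matrix.vecMulVec_eq Unit]
  refine le_trans (Matrix.rank_mul_le_left _ _) ?_
  simpa using Matrix.rank_le_card_width (Matrix.replicateCol Unit w)

lemma my_rank_sum_le {ι m : Type*} [Fintype m] (s : Finset ι)
    (M : ι → Matrix m m ℂ) (h : ∀ i ∈ s, (M i).rank ≤ 1) :
    (∑ i ∈ s, M i).rank ≤ s.card := by
  classical
  induction s using Finset.induction with
  | empty => simp
  | @insert a s ha ih =>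
    rw [Finset.sum_insert ha, Finset.card_insert_of_notMem ha]
    have := h a (Finset.mem_insert_self a s)
    have h2 := ih (fun i hi => h i (Finset.mem_insert_of_mem hi))
    have h3 := my_rank_add_le (M a) (∑ i ∈ s, M i)
    omega

lemma hankel_rank_aux
    (V : Type*) [NormedAddCommGroup V] [InnerProductSpace ℂ V]
    [FiniteDimensional ℂ V] [Nontrivial V]
    (A : V →L[ℂ] V) (hA' : (A : V →ₗ[ℂ] V).IsSymmetric)
    (ψ : V) (τ : ℝ) (L : ℕ)
    (W : Matrix (Fin L) (Fin L) ℂ)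
    (n : ℕ) (hn : Module.finrank ℂ V = n)
    (lam : Fin n → ℝ) (hlam : lam = hA'.eigenvalues hn)
    (c : Fin n → ℂ) (hc : c = fun i => ⟪hA'.eigenvectorBasis hn i, ψ⟫_ℂ)
    (x : ℂ → ℂ) (hx : x = fun μ => Complex.exp (-Complex.I * (τ : ℂ) * μ))
    (key : ∀ p q : Fin L, W p q
      = ∑ i, (starRingEnd ℂ (c i) * c i) * (x (lam i) ^ (p : ℕ) * x (lam i) ^ (q : ℕ))) :
    W.rank ≤
      {μ : ℂ |
        Submodule.orthogonalProjectionOnto (Module.End.eigenspace (A : V →ₗ[ℂ] V) μ) ψ ≠ 0}.ncard := by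
  classical
  set S := {μ : ℂ |
    Submodule.orthogonalProjectionOnto (Module.End.eigenspace (A : V →ₗ[ℂ] V) μ) ψ ≠ 0} with hS
  let T0 : Finset ℂ := Finset.image (fun i => ((lam i : ℝ) : ℂ)) Finset.univ
  let D : ℂ → ℂ := fun μ =>
    ∑ i ∈ Finset.univ.filter (fun i => ((lam i : ℝ) : ℂ) = μ), starRingEnd ℂ (c i) * c i
  let M : ℂ → Matrix (Fin L) (Fin L) ℂ := fun μ =>
    Matrix.vecMulVec (fun p : Fin L => D μ * x μ ^ (p : ℕ)) (fun q : Fin L => x μ ^ (q : ℕ))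
  have hWM : W = ∑ μ ∈ T0, M μ := by
    ext p q
    rw [Matrix.sum_apply, key p q,
      ← Finset.sum_fiberwise_of_maps_to (g := fun i => ((lam i : ℝ) : ℂ))
        (fun i _ => Finset.mem_image.mpr ⟨i, Finset.mem_univ i, rfl⟩)]
    refine Finset.sum_congr rfl fun μ _ => ?_
    show _ = (fun p : Fin L => D μ * x μ ^ (p : ℕ)) p * (fun q : Fin L => x μ ^ (q : ℕ)) q
    simp only [D]
    rw [Finset.sum_mul, Finset.sum_mul]
    refine Finset.sum_congr rfl fun i hi => ?_
    have hieq : ((lam i : ℝ) : ℂ) = μ := (Finset.mem_filter.mp hi).2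
    rw [← hieq]; ring
  let T1 : Finset ℂ := T0.filter (fun μ => D μ ≠ 0)
  have hWM1 : W = ∑ μ ∈ T1, M μ := by
    rw [hWM, Finset.sum_filter_of_ne]
    intro μ _ hMμ hD0
    apply hMμ
    ext p q
    show D μ * x μ ^ (p : ℕ) * x μ ^ (q : ℕ) = (0 : Matrix (Fin L) (Fin L) ℂ) p q
    rw [hD0]; simp
  have hrank : W.rank ≤ T1.card := by
    rw [hWM1]
    exact my_rank_sum_le _ _ (fun μ _ => my_rank_vecMulVec _ _)
  have hsub : (↑T1 : Set ℂ) ⊆ S := by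
    intro μ hμ
    have hD : D μ ≠ 0 := (Finset.mem_filter.mp (Finset.mem_coe.mp hμ)).2
    obtain ⟨i, hi, hterm⟩ :
        ∃ i ∈ Finset.univ.filter (fun i => ((lam i : ℝ) : ℂ) = μ),
          starRingEnd ℂ (c i) * c i ≠ 0 := by
      by_contra h
      push_neg at h
      exact hD (Finset.sum_eq_zero h)
    have hieq : ((lam i : ℝ) : ℂ) = μ := (Finset.mem_filter.mp hi).2
    have hci : c i ≠ 0 := fun h => hterm (by simp [h])
    subst hieq
    intro hP0
    apply hci
    have hbmem : hA'.eigenvectorBasis hn i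
        ∈ Module.End.eigenspace (A : V →ₗ[ℂ] V) ((lam i : ℝ) : ℂ) := by
      rw [hlam]
      exact (hA'.hasEigenvector_eigenvectorBasis hn i).1
    have h1 : ⟪ψ - (Submodule.orthogonalProjectionOnto (Module.End.eigenspace (A : V →ₗ[ℂ] V) ((lam i : ℝ) : ℂ)) ψ : V),
        hA'.eigenvectorBasis hn i⟫_ℂ = 0 := Submodule.starProjection_inner_eq_zero
      (K := Module.End.eigenspace (A : V →ₗ[ℂ] V) ((lam i : ℝ) : ℂ)) ψ
      (hA'.eigenvectorBasis hn i) hbmem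
    rw [hP0] at h1
    simp only [ZeroMemClass.coe_zero, sub_zero] at h1
    have hcieq : c i = ⟪hA'.eigenvectorBasis hn i, ψ⟫_ℂ := by rw [hc]
    rw [hcieq, ← inner_conj_symm, h1, map_zero]
  have hSfin : S.Finite := by
    refine (Module.End.finite_hasEigenvalue (A : V →ₗ[ℂ] V)).subset ?_
    intro μ hμ
    have h1 : ((Submodule.orthogonalProjectionOnto (Module.End.eigenspace (A : V →ₗ[ℂ] V) μ) ψ : V)) ≠ 0 := by
      intro h
      exact hμ (Subtype.coe_injective (by simpa using h))
    exact (Submodule.ne_bot_iff _).mpr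
      ⟨_, (Submodule.orthogonalProjectionOnto (Module.End.eigenspace (A : V →ₗ[ℂ] V) μ) ψ).2, h1⟩
  calc W.rank ≤ T1.card := hrank
    _ = (↑T1 : Set ℂ).ncard := (Set.ncard_coe_finset T1).symm
    _ ≤ S.ncard := Set.ncard_le_ncard hsub hSfin

/-- **Rank bound on the Hankel matrix of autocorrelation samples.**
For a self-adjoint operator `A` on a finite-dimensional complex inner product space,
`ψ ∈ V`, `τ ∈ ℝ` and `L ≥ 1`, the rank of the Hankel matrix
`W_{pq} = ⟨ψ, e^{−i(p+q)τA} ψ⟩` is at most the number of distinct eigenvalues `E`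
of `A` whose eigenspace has nonzero orthogonal projection of `ψ`. -/
theorem autocorrelation_hankel_rank_le
    (V : Type*) [NormedAddCommGroup V] [InnerProductSpace ℂ V]
    [FiniteDimensional ℂ V] [Nontrivial V]
    (A : V →L[ℂ] V) (hA : ∀ φ χ : V, ⟪A φ, χ⟫_ℂ = ⟪φ, A χ⟫_ℂ)
    (ψ : V) (τ : ℝ) (L : ℕ) (hL : 1 ≤ L)
    (W : Matrix (Fin L) (Fin L) ℂ)
    (hW : ∀ p q : Fin L,
      W p q = ⟪ψ, NormedSpace.exp
        ((-Complex.I * ((((p : ℕ) + (q : ℕ) : ℕ) : ℂ)) * (τ : ℂ)) • A) ψ⟫_ℂ) :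
    W.rank ≤
      {μ : ℂ |
        Submodule.orthogonalProjectionOnto (Module.End.eigenspace (A : V →ₗ[ℂ] V) μ) ψ ≠ 0}.ncard := by
  classical
  have hA' : (A : V →ₗ[ℂ] V).IsSymmetric := fun x y => hA x y
  have hn : Module.finrank ℂ V = Module.finrank ℂ V := rfl
  set n := Module.finrank ℂ V
  let b := hA'.eigenvectorBasis hn
  let lam : Fin n → ℝ := hA'.eigenvalues hn
  let c : Fin n → ℂ := fun i => ⟪b i, ψ⟫_ℂ
  let x : ℂ → ℂ := fun μ => Complex.exp (-Complex.I * (τ : ℂ) * μ)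
  have hT : ∀ cc : ℂ, NormedSpace.exp (cc • A) ψ
      = ∑ i, (c i * Complex.exp (cc * (lam i : ℂ))) • b i := by
    intro cc
    conv_lhs => rw [← b.sum_repr' ψ, map_sum]
    refine Finset.sum_congr rfl fun i _ => ?_
    rw [_root_.map_smul, exp_apply_eigenvector' (cc • A) (cc * (lam i : ℂ)) (b i) ?_, smul_smul]
    rw [ContinuousLinearMap.smul_apply]
    have : A (b i) = (lam i : ℂ) • b i := hA'.apply_eigenvectorBasis hn i
    rw [this, smul_smul]
  have key : ∀ p q : Fin L, W p q
      = ∑ i, (starRingEnd ℂ (c i) * c i) * (x (lam i) ^ (p : ℕ) * x (lam i) ^ (q : ℕ)) := by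
    intro p q
    rw [hW p q, hT _, inner_sum]
    refine Finset.sum_congr rfl fun i _ => ?_
    rw [inner_smul_right]
    have h1 : ⟪ψ, b i⟫_ℂ = starRingEnd ℂ (c i) := by
      simp only [c]; rw [← inner_conj_symm]
    rw [h1]
    have h2 : Complex.exp (-Complex.I * ((((p : ℕ) + (q : ℕ) : ℕ) : ℂ)) * (τ : ℂ) * (lam i : ℂ))
        = x (lam i) ^ (p : ℕ) * x (lam i) ^ (q : ℕ) := by
      have : -Complex.I * ((((p : ℕ) + (q : ℕ) : ℕ) : ℂ)) * (τ : ℂ) * (lam i : ℂ)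
          = (((p : ℕ) + (q : ℕ) : ℕ) : ℂ) * (-Complex.I * (τ : ℂ) * (lam i : ℂ)) := by
        push_cast; ring
      rw [this, Complex.exp_nat_mul, ← pow_add]
    rw [h2]; ring
  exact hankel_rank_aux V A hA' ψ τ L W n hn lam rfl c rfl x rfl key
end

section
/- (Carathéodory–Fejér / Vandermonde decomposition) Let n ≥ 2 and let T be an n×n complex Hermitian positive semidefinite Toeplitz matrix (i.e. T_{jk} depends only on j−k, Tᴴ = T, and v̄ᵀ T v ≥ 0 for all v ∈ ℂ^n). Let r = rank(T) and assume r ≤ n − 1. Then there exist pairwise distinct ω_1, …, ω_r ∈ [0, 2π) and strictly positive reals p_1, …, p_r such that T = Σ_{k=1}^r p_k · a_n(ω_k) · a_n(ω_k)ᴴ. -/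
open Matrix
open scoped ComplexOrder

namespace CF
open Polynomial

variable {n : ℕ}

noncomputable def polyOfL (N : ℕ) : (Fin N → ℂ) →ₗ[ℂ] ℂ[X] :=
  ∑ j : Fin N, (LinearMap.proj j).smulRight (X ^ (j : ℕ) : ℂ[X])

lemma polyOfL_apply (N : ℕ) (g : Fin N → ℂ) :
    polyOfL N g = ∑ j : Fin N, C (g j) * X ^ (j : ℕ) := by
  simp [polyOfL, LinearMap.sum_apply, LinearMap.smulRight_apply, smul_eq_C_mul]

lemma coeff_polyOfL (N : ℕ) (g : Fin N → ℂ) (i : ℕ) :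
    (polyOfL N g).coeff i = if h : i < N then g ⟨i, h⟩ else 0 := by
  rw [polyOfL_apply, finset_sum_coeff]
  simp only [coeff_C_mul, coeff_X_pow]
  split
  · next h =>
    rw [Finset.sum_eq_single (⟨i, h⟩ : Fin N)]
    · simp
    · intro b _ hb
      have : ¬ (i = (b : ℕ)) := fun he => hb (by apply Fin.ext; simp [← he])
      simp [this]
    · simp
  · next h =>
    apply Finset.sum_eq_zero
    intro b _
    have : ¬ (i = (b : ℕ)) := by
      intro he; exact h (he ▸ b.isLt)
    simp [this]

lemma natDegree_polyOfL (N : ℕ) (g : Fin N → ℂ) : (polyOfL N g).natDegree ≤ N - 1 := by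
  apply natDegree_le_iff_coeff_eq_zero.mpr
  intro i hi
  rw [coeff_polyOfL]
  rw [dif_neg (by omega)]

noncomputable def vecL (n : ℕ) : ℂ[X] →ₗ[ℂ] (Fin n → ℂ) :=
  LinearMap.pi fun j : Fin n => lcoeff ℂ (j : ℕ)

@[simp] lemma vecL_apply (p : ℂ[X]) (j : Fin n) : vecL n p j = p.coeff j := rfl

lemma vecL_polyOfL (g : Fin n → ℂ) : vecL n (polyOfL n g) = g := by
  funext j
  rw [vecL_apply, coeff_polyOfL, dif_pos j.isLt]


noncomputable def B (T : Matrix (Fin n) (Fin n) ℂ) (p q : ℂ[X]) : ℂ :=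
  star (vecL n q) ⬝ᵥ T *ᵥ vecL n p

lemma B_null {T : Matrix (Fin n) (Fin n) ℂ} {p : ℂ[X]}
    (h : T *ᵥ vecL n p = 0) (q : ℂ[X]) : B T p q = 0 := by
  simp [B, h]

lemma null_of_B {T : Matrix (Fin n) (Fin n) ℂ} (hPSD : T.PosSemidef) {p : ℂ[X]}
    (h : B T p p = 0) : T *ᵥ vecL n p = 0 :=
  (hPSD.dotProduct_mulVec_zero_iff _).mp h

lemma B_sub_smul_left (T : Matrix (Fin n) (Fin n) ℂ) (p p' q : ℂ[X]) (a : ℂ) :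
    B T (p - a • p') q = B T p q - a * B T p' q := by
  simp [B, map_sub, _root_.map_smul, Matrix.mulVec_sub, Matrix.mulVec_smul,
    dotProduct_sub, dotProduct_smul, smul_eq_mul]

lemma B_sub_smul_right (T : Matrix (Fin n) (Fin n) ℂ) (p q q' : ℂ[X]) (a : ℂ) :
    B T p (q - a • q') = B T p q - (starRingEnd ℂ) a * B T p q' := by
  simp [B, map_sub, _root_.map_smul, sub_dotProduct, smul_dotProduct, star_smul, smul_eq_mul]

lemma B_herm {T : Matrix (Fin n) (Fin n) ℂ} (hT : T.IsHermitian) (p q : ℂ[X]) :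
    B T q p = (starRingEnd ℂ) (B T p q) := by
  simp only [B, dotProduct, mulVec, dotProduct, map_sum, _root_.map_mul, Finset.mul_sum,
    Pi.star_apply, vecL_apply]
  rw [Finset.sum_comm]
  refine Finset.sum_congr rfl fun k _ => Finset.sum_congr rfl fun j _ => ?_
  have h1 : (starRingEnd ℂ) (T k j) = T j k := hT.apply j k
  have h2 : (starRingEnd ℂ) (star (q.coeff (k:ℕ)) : ℂ) = q.coeff (k:ℕ) := by simp
  have h3 : (starRingEnd ℂ) (p.coeff (j:ℕ)) = star (p.coeff (j:ℕ)) := rfl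
  rw [h1, h2, h3]
  ring


noncomputable def Tf (T : Matrix (Fin n) (Fin n) ℂ) (k j : ℕ) : ℂ :=
  if h : k < n ∧ j < n then T ⟨k, h.1⟩ ⟨j, h.2⟩ else 0

lemma B_eq_sum (T : Matrix (Fin n) (Fin n) ℂ) (u v : ℂ[X]) :
    B T u v = ∑ k ∈ Finset.range n, ∑ j ∈ Finset.range n,
      star (v.coeff k) * (Tf T k j * u.coeff j) := by
  rw [B, dotProduct,
    ← Fin.sum_univ_eq_sum_range (fun k => ∑ j ∈ Finset.range n,
        star (v.coeff k) * (Tf T k j * u.coeff j))]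
  refine Finset.sum_congr rfl fun k _ => ?_
  rw [← Fin.sum_univ_eq_sum_range (fun j => star (v.coeff (k:ℕ)) * (Tf T (k:ℕ) j * u.coeff j))]
  simp only [mulVec, dotProduct, Pi.star_apply, vecL_apply, Finset.mul_sum]
  refine Finset.sum_congr rfl fun j _ => ?_
  have hTf : Tf T (k:ℕ) (j:ℕ) = T k j := by simp [Tf, k.isLt, j.isLt]
  rw [hTf]

lemma B_shift {T : Matrix (Fin n) (Fin n) ℂ} (hn : 2 ≤ n)
    (hToep : ∀ j k j' k' : Fin n,
      ((j : ℕ) : ℤ) - ((k : ℕ) : ℤ) = ((j' : ℕ) : ℤ) - ((k' : ℕ) : ℤ) → T j k = T j' k')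
    {p q : ℂ[X]} (hp : p.natDegree ≤ n - 2) (hq : q.natDegree ≤ n - 2) :
    B T (X * p) (X * q) = B T p q := by
  have hTf : ∀ k j : ℕ, k < n - 1 → j < n - 1 → Tf T (k+1) (j+1) = Tf T k j := by
    intro k j hk hj
    have h1 : k + 1 < n ∧ j + 1 < n := ⟨by omega, by omega⟩
    have h2 : k < n ∧ j < n := ⟨by omega, by omega⟩
    simp only [Tf, dif_pos h1, dif_pos h2]
    exact hToep _ _ _ _ (by push_cast; omega)
  obtain ⟨m, rfl⟩ : ∃ m, n = m + 1 := ⟨n - 1, by omega⟩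
  have hm : 1 ≤ m := by omega
  rw [B_eq_sum, B_eq_sum]
  have hpm : p.coeff m = 0 := Polynomial.coeff_eq_zero_of_natDegree_lt (by omega)
  have hqm : q.coeff m = 0 := Polynomial.coeff_eq_zero_of_natDegree_lt (by omega)
  have hRHS : ∑ k ∈ Finset.range (m+1), ∑ j ∈ Finset.range (m+1),
        star (q.coeff k) * (Tf T k j * p.coeff j)
      = ∑ k ∈ Finset.range m, ∑ j ∈ Finset.range m,
        star (q.coeff k) * (Tf T k j * p.coeff j) := by
    rw [Finset.sum_range_succ]
    simp only [hqm, star_zero, zero_mul, Finset.sum_const_zero, add_zero]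
    refine Finset.sum_congr rfl fun k _ => ?_
    rw [Finset.sum_range_succ]
    simp [hpm]
  have hLHS : ∑ k ∈ Finset.range (m+1), ∑ j ∈ Finset.range (m+1),
        star ((X*q).coeff k) * (Tf T k j * (X*p).coeff j)
      = ∑ k ∈ Finset.range m, ∑ j ∈ Finset.range m,
        star (q.coeff k) * (Tf T (k+1) (j+1) * p.coeff j) := by
    rw [Finset.sum_range_succ']
    have hq0 : (X*q).coeff 0 = 0 := by simp [Polynomial.mul_coeff_zero]
    have hp0 : (X*p).coeff 0 = 0 := by simp [Polynomial.mul_coeff_zero]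
    simp only [hq0, star_zero, zero_mul, Finset.sum_const_zero, add_zero]
    refine Finset.sum_congr rfl fun k _ => ?_
    rw [Finset.sum_range_succ']
    simp only [hp0, mul_zero, add_zero, Polynomial.coeff_X_mul]
  rw [hLHS, hRHS]
  refine Finset.sum_congr rfl fun k hk => Finset.sum_congr rfl fun j hj => ?_
  rw [hTf k j (by simpa using hk) (by simpa using hj)]

lemma key {T : Matrix (Fin n) (Fin n) ℂ} (hn : 2 ≤ n)
    (hToep : ∀ j k j' k' : Fin n,
      ((j : ℕ) : ℤ) - ((k : ℕ) : ℤ) = ((j' : ℕ) : ℤ) - ((k' : ℕ) : ℤ) → T j k = T j' k')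
    (hPSD : T.PosSemidef) {r : ℕ} (hr : r = T.rank) (hrn : r ≤ n - 1) (hr0 : 1 ≤ r) :
    ∃ c : ℂ[X], c ≠ 0 ∧ c.natDegree = r ∧
      (∀ x : Fin n → ℂ, T *ᵥ x = 0 →
        ∃ q : ℂ[X], q.natDegree ≤ n - 1 - r ∧ x = vecL n (q * c)) ∧
      (∀ z : ℂ, c.IsRoot z → z * (starRingEnd ℂ) z = 1) ∧
      (∀ z : ℂ, ¬ ((X - C z)^2 ∣ c)) ∧
      (Module.finrank ℂ (LinearMap.ker T.mulVecLin) = n - r) := by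
  classical
  -- the kernel is nontrivial
  have hker : ∃ x : Fin n → ℂ, x ≠ 0 ∧ T *ᵥ x = 0 := by
    by_contra h
    push_neg at h
    have hinj : Function.Injective T.mulVecLin := by
      rw [injective_iff_map_eq_zero]
      intro x hx
      by_contra hx0
      exact h x hx0 (by rwa [Matrix.mulVecLin_apply] at hx)
    have hrank : T.rank = n := by
      rw [Matrix.rank, LinearMap.finrank_range_of_inj hinj, Module.finrank_fintype_fun_eq_card,
        Fintype.card_fin]
    omega
  -- minimal degree kernel polynomial
  let P : ℕ → Prop := fun d => ∃ p : ℂ[X], p ≠ 0 ∧ T *ᵥ vecL n p = 0 ∧ p.natDegree = d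
  have hPex : ∃ d, P d := by
    obtain ⟨x, hx0, hx⟩ := hker
    refine ⟨(polyOfL n x).natDegree, polyOfL n x, ?_, by rwa [vecL_polyOfL], rfl⟩
    intro h0
    exact hx0 (by rw [← vecL_polyOfL (n := n) x, h0, map_zero])
  set d := Nat.find hPex with hd
  obtain ⟨c, hc0, hcnull, hcd⟩ : P d := Nat.find_spec hPex
  have hmin : ∀ p : ℂ[X], p ≠ 0 → T *ᵥ vecL n p = 0 → d ≤ p.natDegree := by
    intro p h1 h2
    exact Nat.find_min' hPex ⟨p, h1, h2, rfl⟩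
  have hd_le : d ≤ n - 1 := by
    obtain ⟨x, hx0, hx⟩ := hker
    have h1 : d ≤ (polyOfL n x).natDegree := by
      apply hmin
      · intro h0
        exact hx0 (by rw [← vecL_polyOfL (n := n) x, h0, map_zero])
      · rwa [vecL_polyOfL]
    exact h1.trans (by have := natDegree_polyOfL n x; omega)
  -- shifted copies are still in the kernel
  have hshift : ∀ m : ℕ, m + d ≤ n - 1 → T *ᵥ vecL n (X ^ m * c) = 0 := by
    intro m
    induction m with
    | zero => intro _; simpa using hcnull
    | succ k ih =>
      intro hk
      have hXk : (X ^ k * c) ≠ 0 := mul_ne_zero (pow_ne_zero _ X_ne_zero) hc0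
      have hdeg : (X ^ k * c).natDegree ≤ n - 2 := by
        rw [natDegree_mul (pow_ne_zero _ X_ne_zero) hc0, natDegree_X_pow, hcd]
        omega
      have h0 : B T (X ^ k * c) (X ^ k * c) = 0 := B_null (ih (by omega)) _
      have h1 : B T (X * (X ^ k * c)) (X * (X ^ k * c)) = 0 := by
        rw [B_shift hn hToep hdeg hdeg]; exact h0
      have h2 : X * (X ^ k * c) = X ^ (k + 1) * c := by ring
      rw [h2] at h1
      exact null_of_B hPSD h1
  -- all small multiples of c are in the kernel
  have hmul : ∀ q : ℂ[X], q.natDegree ≤ n - 1 - d → T *ᵥ vecL n (q * c) = 0 := by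
    intro q hq
    have hqc : q * c = ∑ m ∈ q.support, q.coeff m • (X ^ m * c) := by
      conv_lhs => rw [q.as_sum_support]
      rw [Finset.sum_mul]
      refine Finset.sum_congr rfl fun m _ => ?_
      rw [smul_eq_C_mul, ← C_mul_X_pow_eq_monomial]
      ring
    have : T *ᵥ vecL n (q * c) = T.mulVecLin (vecL n (q * c)) := rfl
    rw [this, hqc, map_sum, map_sum]
    apply Finset.sum_eq_zero
    intro m hm
    have hmle : m ≤ q.natDegree := le_natDegree_of_mem_supp m hm
    rw [_root_.map_smul, _root_.map_smul]
    have : T.mulVecLin (vecL n (X ^ m * c)) = 0 := by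
      rw [Matrix.mulVecLin_apply]
      exact hshift m (by omega)
    rw [this, smul_zero]
  -- division by c
  have hγ : c.leadingCoeff ≠ 0 := leadingCoeff_ne_zero.mpr hc0
  set c' := c * C c.leadingCoeff⁻¹ with hc'def
  have hc'monic : c'.Monic := monic_mul_leadingCoeff_inv hc0
  have hc'deg : c'.natDegree = d := by
    rw [hc'def, natDegree_mul hc0 (by simpa using inv_ne_zero hγ), natDegree_C, hcd, add_zero]
  have hdiv : ∀ x : Fin n → ℂ, T *ᵥ x = 0 →
      ∃ q : ℂ[X], q.natDegree ≤ n - 1 - d ∧ x = vecL n (q * c) := by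
    intro x hx
    set p0 := polyOfL n x with hp0
    have hvp0 : vecL n p0 = x := vecL_polyOfL x
    have hdeg0 : p0.natDegree ≤ n - 1 := natDegree_polyOfL n x
    have hdm : p0 %ₘ c' + c' * (p0 /ₘ c') = p0 := modByMonic_add_div p0 c'
    set q2 := C c.leadingCoeff⁻¹ * (p0 /ₘ c') with hq2
    have hq2c : q2 * c = c' * (p0 /ₘ c') := by rw [hq2, hc'def]; ring
    have hq2deg : q2.natDegree ≤ n - 1 - d := by
      have h1 : (p0 /ₘ c').natDegree = p0.natDegree - d := by
        rw [natDegree_divByMonic p0 hc'monic, hc'deg]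
      have h2 : q2.natDegree ≤ (p0 /ₘ c').natDegree := natDegree_C_mul_le _ _
      omega
    have hrem : T *ᵥ vecL n (p0 %ₘ c') = 0 := by
      have he : p0 %ₘ c' = p0 - q2 * c := by rw [hq2c]; exact eq_sub_of_add_eq hdm
      rw [he, map_sub, Matrix.mulVec_sub, hvp0, hx, hmul q2 hq2deg, sub_zero]
    have hrem0 : p0 %ₘ c' = 0 := by
      by_contra hne
      have h1 : (p0 %ₘ c').natDegree < d := by
        have h2 := degree_modByMonic_lt p0 hc'monic
        rw [degree_eq_natDegree hc'monic.ne_zero, hc'deg] at h2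
        exact (natDegree_lt_iff_degree_lt hne).mpr h2
      have := hmin _ hne hrem
      omega
    refine ⟨q2, hq2deg, ?_⟩
    rw [← hvp0, ← hdm, hrem0, zero_add, hq2c]
  -- d = r via dimension count
  have hfr : Module.finrank ℂ (LinearMap.ker T.mulVecLin) = n - d := by
    let ψ : (Fin (n - d) → ℂ) →ₗ[ℂ] (Fin n → ℂ) :=
      (vecL n) ∘ₗ ((LinearMap.mulRight ℂ c) ∘ₗ polyOfL (n - d))
    have hψ : ∀ g, ψ g = vecL n (polyOfL (n - d) g * c) := fun g => rfl
    have hψinj : Function.Injective ψ := by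
      rw [injective_iff_map_eq_zero]
      intro g hg
      rw [hψ] at hg
      set u := polyOfL (n - d) g * c with hudef
      have hdegu : u.natDegree ≤ n - 1 := by
        by_cases hg0 : polyOfL (n - d) g = 0
        · simp [hudef, hg0]
        · rw [hudef, natDegree_mul hg0 hc0, hcd]
          have := natDegree_polyOfL (n - d) g
          omega
      have hu0 : u = 0 := by
        apply Polynomial.ext
        intro i
        by_cases hi : i < n
        · have := congrFun hg (⟨i, hi⟩ : Fin n)
          simpa using this
        · rw [coeff_eq_zero_of_natDegree_lt (by omega), coeff_zero]
      have hg0 : polyOfL (n - d) g = 0 := by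
        rcases mul_eq_zero.mp hu0 with h | h
        · exact h
        · exact absurd h hc0
      funext j
      have := congrArg (fun p => Polynomial.coeff p (j : ℕ)) hg0
      simpa [coeff_polyOfL, j.isLt] using this
    have hψrange : LinearMap.range ψ = LinearMap.ker T.mulVecLin := by
      apply le_antisymm
      · rintro _ ⟨g, rfl⟩
        rw [LinearMap.mem_ker, hψ, Matrix.mulVecLin_apply]
        refine hmul _ ((natDegree_polyOfL _ _).trans (by omega))
      · intro x hx
        rw [LinearMap.mem_ker, Matrix.mulVecLin_apply] at hx
        obtain ⟨q, hq, hxe⟩ := hdiv x hx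
        refine ⟨fun m : Fin (n - d) => q.coeff (m : ℕ), ?_⟩
        rw [hψ]
        have hpq : polyOfL (n - d) (fun m : Fin (n - d) => q.coeff (m : ℕ)) = q := by
          apply Polynomial.ext
          intro i
          rw [coeff_polyOfL]
          split
          · rfl
          · exact (coeff_eq_zero_of_natDegree_lt (by omega)).symm
        rw [hpq, ← hxe]
    rw [← hψrange, LinearMap.finrank_range_of_inj hψinj, Module.finrank_fintype_fun_eq_card,
      Fintype.card_fin]
  have hdr : d = r := by
    have h2 := LinearMap.finrank_range_add_finrank_ker T.mulVecLin
    rw [hfr, Module.finrank_fintype_fun_eq_card, Fintype.card_fin] at h2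
    have h3 : T.rank = Module.finrank ℂ (LinearMap.range T.mulVecLin) := rfl
    omega
  -- roots lie on the unit circle
  have hroot : ∀ z : ℂ, c.IsRoot z → z * (starRingEnd ℂ) z = 1 := by
    intro z hz
    obtain ⟨g, hg⟩ := dvd_iff_isRoot.mpr hz
    have hgne : g ≠ 0 := fun h => hc0 (by rw [hg, h, mul_zero])
    have hdeg1 : d = 1 + g.natDegree := by
      rw [← hcd, hg, natDegree_mul (X_sub_C_ne_zero z) hgne, natDegree_X_sub_C]
    have hgdeg : g.natDegree ≤ n - 2 := by omega
    have hc : c = X * g - z • g := by rw [hg, smul_eq_C_mul]; ring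
    have hBnull : ∀ q, B T c q = 0 := B_null hcnull
    have hBX : ∀ q, B T (X * g) q = z * B T g q := by
      intro q
      have h0 := hBnull q
      rw [hc, B_sub_smul_left] at h0
      exact sub_eq_zero.mp h0
    have hBgg_ne : B T g g ≠ 0 := by
      intro h0
      have h1 := null_of_B hPSD h0
      have := hmin g hgne h1
      omega
    have hBgg_conj : (starRingEnd ℂ) (B T g g) = B T g g := (B_herm hPSD.1 g g).symm
    have hshift2 : B T (X * g) (X * g) = B T g g := B_shift hn hToep hgdeg hgdeg
    have hconj : B T g (X * g) = (starRingEnd ℂ) z * B T g g := by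
      rw [B_herm hPSD.1 (X * g) g, hBX g, _root_.map_mul, hBgg_conj]
    have hfin : B T g g = (z * (starRingEnd ℂ) z) * B T g g := by
      calc B T g g = B T (X * g) (X * g) := hshift2.symm
        _ = z * B T g (X * g) := hBX (X * g)
        _ = z * ((starRingEnd ℂ) z * B T g g) := by rw [hconj]
        _ = (z * (starRingEnd ℂ) z) * B T g g := by ring
    have := mul_right_cancel₀ hBgg_ne (by rw [← hfin, one_mul] : (1 : ℂ) * B T g g = (z * (starRingEnd ℂ) z) * B T g g)
    exact this.symm
  -- roots are simple
  have hsimple : ∀ z : ℂ, ¬ ((X - C z)^2 ∣ c) := by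
    rintro z ⟨h, hh⟩
    have hz1 : z * (starRingEnd ℂ) z = 1 := by
      apply hroot
      rw [IsRoot, hh]
      simp
    have hhne : h ≠ 0 := fun h0 => hc0 (by rw [hh, h0, mul_zero])
    set u := (X - C z) * h with hu
    have hune : u ≠ 0 := mul_ne_zero (X_sub_C_ne_zero z) hhne
    have hdeg2 : d = 2 + h.natDegree := by
      rw [← hcd, hh, natDegree_mul (pow_ne_zero _ (X_sub_C_ne_zero z)) hhne,
        natDegree_pow, natDegree_X_sub_C]
    have hudeg : u.natDegree = 1 + h.natDegree := by
      rw [hu, natDegree_mul (X_sub_C_ne_zero z) hhne, natDegree_X_sub_C]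
    have hudeg2 : u.natDegree ≤ n - 2 := by omega
    have hhdeg2 : h.natDegree ≤ n - 2 := by omega
    have hcu : c = X * u - z • u := by
      rw [hh, hu, smul_eq_C_mul]; ring
    have hu2 : u = X * h - z • h := by rw [hu, smul_eq_C_mul]; ring
    have hBc : ∀ q, B T c q = 0 := B_null hcnull
    have e1 : B T (X * u) (X * h) = z * B T u (X * h) := by
      have h0 := hBc (X * h)
      rw [hcu, B_sub_smul_left] at h0
      exact sub_eq_zero.mp h0
    have e2 : B T (X * u) (X * h) = B T u h := B_shift hn hToep hudeg2 hhdeg2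
    have e3 : B T u u = B T u (X * h) - (starRingEnd ℂ) z * B T u h := by
      nth_rewrite 2 [hu2]
      exact B_sub_smul_right T u (X * h) h z
    have e4 : B T u u = 0 := by
      rw [e3, ← e2, e1]
      have : (starRingEnd ℂ) z * (z * B T u (X * h)) = B T u (X * h) := by
        rw [← mul_assoc, mul_comm ((starRingEnd ℂ) z) z, hz1, one_mul]
      rw [this, sub_self]
    have h5 : T *ᵥ vecL n u = 0 := null_of_B hPSD e4
    have := hmin u hune h5
    omega
  refine ⟨c, hc0, by omega, ?_, hroot, hsimple, by rw [hfr]; omega⟩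
  intro x hx
  obtain ⟨q, hq, hxe⟩ := hdiv x hx
  exact ⟨q, by omega, hxe⟩


end CF

/-- **Carathéodory–Fejér / Vandermonde decomposition.**
Every `n×n` Hermitian positive semidefinite Toeplitz matrix of rank `r ≤ n − 1`
decomposes as `T = Σ_{k=1}^r p_k a_n(ω_k) a_n(ω_k)ᴴ` with pairwise distinct
`ω_k ∈ [0, 2π)` and strictly positive weights `p_k`. -/
theorem vandermonde_decomposition
    (n : ℕ) (hn : 2 ≤ n)
    (T : Matrix (Fin n) (Fin n) ℂ)
    (hToep : ∀ j k j' k' : Fin n,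
      ((j : ℕ) : ℤ) - ((k : ℕ) : ℤ) = ((j' : ℕ) : ℤ) - ((k' : ℕ) : ℤ) → T j k = T j' k')
    (hPSD : T.PosSemidef)
    (r : ℕ) (hr : r = T.rank) (hrn : r ≤ n - 1) :
    ∃ (ω : Fin r → ℝ) (p : Fin r → ℝ),
      Function.Injective ω ∧ (∀ k, ω k ∈ Set.Ico (0 : ℝ) (2 * Real.pi)) ∧
      (∀ k, 0 < p k) ∧
      T = ∑ k, (p k : ℂ) • Matrix.vecMulVec (steer n (ω k)) (star (steer n (ω k))) := by
  classical
  rcases Nat.eq_zero_or_pos r with hr0 | hr1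
  · subst hr0
    have hT0 : T = 0 := by
      have h0 : Module.finrank ℂ (LinearMap.range T.mulVecLin) = 0 := by
        rw [← Matrix.rank]; omega
      have h1 : LinearMap.range T.mulVecLin = ⊥ := Submodule.finrank_eq_zero.mp h0
      have h2 : T.mulVecLin = 0 := LinearMap.range_eq_bot.mp h1
      ext i j
      have h4 : T *ᵥ Pi.single j 1 = 0 := by
        rw [← Matrix.mulVecLin_apply, h2]; rfl
      have h5 := congrFun h4 i
      simpa [Matrix.mulVec, dotProduct, Pi.single_apply] using h5
    refine ⟨Fin.elim0, Fin.elim0, by intro a; exact a.elim0, by intro a; exact a.elim0,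
      by intro a; exact a.elim0, ?_⟩
    simp [hT0]
  · obtain ⟨c, hc0, hcd, hdiv, hroot, hsimple, hfr⟩ := CF.key hn hToep hPSD hr hrn hr1
    have hsplits : c.Splits := IsAlgClosed.splits c
    have hcard : Multiset.card c.roots = r := by
      have h1 := Polynomial.Splits.natDegree_eq_card_roots hsplits
      rw [hcd] at h1
      omega
    have hnodup : c.roots.Nodup := by
      rw [Multiset.nodup_iff_count_le_one]
      intro z
      by_contra hz
      push_neg at hz
      have h2 : 2 ≤ Polynomial.rootMultiplicity z c := by
        rwa [← Polynomial.count_roots]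
      exact hsimple z ((pow_dvd_pow _ h2).trans (Polynomial.pow_rootMultiplicity_dvd c z))
    have hcardF : c.roots.toFinset.card = r := by
      rw [Multiset.toFinset_card_of_nodup hnodup, hcard]
    let e : {x // x ∈ c.roots.toFinset} ≃ Fin r :=
      Fintype.equivFinOfCardEq (by rwa [Fintype.card_coe])
    let lam : Fin r → ℂ := fun a => (e.symm a : ℂ)
    have hlaminj : Function.Injective lam := by
      intro a b hab
      have := e.symm.injective (Subtype.ext hab)
      exact this
    have hlamroot : ∀ a, c.IsRoot (lam a) := by
      intro a
      have h1 := (e.symm a).2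
      rw [Multiset.mem_toFinset, Polynomial.mem_roots hc0] at h1
      exact h1
    have hlam1 : ∀ a, lam a * (starRingEnd ℂ) (lam a) = 1 := fun a => hroot _ (hlamroot a)
    let ω : Fin r → ℝ := fun a =>
      if 0 ≤ (lam a).arg then (lam a).arg else (lam a).arg + 2 * Real.pi
    have habs : ∀ a, ‖lam a‖ = 1 := by
      intro a
      have h1 : Complex.normSq (lam a) = 1 := by
        have h2 := hlam1 a
        rw [Complex.mul_conj] at h2
        exact_mod_cast h2
      rw [Complex.norm_def, h1, Real.sqrt_one]
    have hexp : ∀ a, Complex.exp ((ω a : ℝ) * Complex.I) = lam a := by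
      intro a
      have h1 : Complex.exp ((lam a).arg * Complex.I) = lam a := by
        have h2 := Complex.norm_mul_exp_arg_mul_I (lam a)
        rwa [habs a, Complex.ofReal_one, one_mul] at h2
      by_cases h : 0 ≤ (lam a).arg
      · simp only [ω, if_pos h]; exact h1
      · simp only [ω, if_neg h]
        push_cast
        rw [add_mul, Complex.exp_add, h1, Complex.exp_two_pi_mul_I, mul_one]
    have hω : ∀ a, ω a ∈ Set.Ico (0 : ℝ) (2 * Real.pi) := by
      intro a
      have h1 := Complex.arg_le_pi (lam a)
      have h2 := Complex.neg_pi_lt_arg (lam a)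
      have h3 := Real.pi_pos
      by_cases h : 0 ≤ (lam a).arg
      · simp only [ω, if_pos h, Set.mem_Ico]
        constructor
        · exact h
        · linarith
      · simp only [ω, if_neg h, Set.mem_Ico]
        push_neg at h
        constructor
        · linarith
        · linarith
    have hωinj : Function.Injective ω := by
      intro a b hab
      apply hlaminj
      rw [← hexp a, ← hexp b, hab]
    have hconj_lam : ∀ a, (starRingEnd ℂ) (lam a) = (lam a)⁻¹ := by
      intro a
      exact eq_inv_of_mul_eq_one_left (by rw [mul_comm]; exact hlam1 a)
    let w : Fin r → (Fin n → ℂ) := fun a i => (starRingEnd ℂ) (lam a) ^ (i : ℕ)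
    have hsteer : ∀ a, steer n (ω a) = w a := by
      intro a
      funext i
      have h1 : (-Complex.I * (ω a : ℝ) * ((i : ℕ) : ℂ)) = ((i : ℕ) : ℂ) * (-(((ω a : ℝ) : ℂ) * Complex.I)) := by
        ring
      rw [steer]
      show Complex.exp (-Complex.I * (ω a : ℝ) * ((i : ℕ) : ℂ)) = _
      rw [h1, Complex.exp_nat_mul, Complex.exp_neg, hexp a, ← hconj_lam a]
    have hrle : r ≤ n := by omega
    -- square Vandermonde matrices
    let Vsq : Matrix (Fin r) (Fin r) ℂ := fun i b => (starRingEnd ℂ) (lam b) ^ (i : ℕ)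
    have hdet : Vsq.det ≠ 0 := by
      have h1 : Vsq = (Matrix.vandermonde (fun b => (starRingEnd ℂ) (lam b)))ᵀ := by
        ext i b
        simp [Vsq, Matrix.vandermonde, Matrix.transpose_apply]
      rw [h1, Matrix.det_transpose, Matrix.det_vandermonde]
      apply Finset.prod_ne_zero_iff.mpr
      intro i _
      apply Finset.prod_ne_zero_iff.mpr
      intro j hj
      have hij : i ≠ j := ne_of_lt (Finset.mem_Ioi.mp hj)
      intro h0
      exact hij (hlaminj ((starRingEnd ℂ).injective (sub_eq_zero.mp h0))).symm
    have hdetU : IsUnit Vsq.det := isUnit_iff_ne_zero.mpr hdet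
    let V2 : Matrix (Fin r) (Fin r) ℂ := Matrix.vandermonde lam
    have hV2det : V2.det ≠ 0 := by
      rw [Matrix.det_vandermonde]
      apply Finset.prod_ne_zero_iff.mpr
      intro i _
      apply Finset.prod_ne_zero_iff.mpr
      intro j hj
      have hij : i ≠ j := ne_of_lt (Finset.mem_Ioi.mp hj)
      intro h0
      exact hij (hlaminj (sub_eq_zero.mp h0)).symm
    have hV2detU : IsUnit V2.det := isUnit_iff_ne_zero.mpr hV2det
    -- linear independence of the steering vectors
    have hli : LinearIndependent ℂ w := by
      rw [Fintype.linearIndependent_iff]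
      intro g hg
      have hVg : Vsq *ᵥ g = 0 := by
        funext i
        have h1 := congrFun hg (Fin.castLE hrle i)
        simp only [Finset.sum_apply, Pi.smul_apply, smul_eq_mul, Pi.zero_apply] at h1
        rw [Matrix.mulVec, Pi.zero_apply]
        rw [← h1]
        rw [dotProduct]
        refine Finset.sum_congr rfl fun b _ => ?_
        have : (Fin.castLE hrle i : ℕ) = (i : ℕ) := rfl
        simp only [w, this]
        ring
      have hg0 : g = 0 := by
        have h2 : Vsq⁻¹ *ᵥ (Vsq *ᵥ g) = g := by
          rw [Matrix.mulVec_mulVec, Matrix.nonsing_inv_mul _ hdetU, Matrix.one_mulVec]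
        rw [hVg, Matrix.mulVec_zero] at h2
        exact h2.symm
      intro a
      rw [hg0]
      rfl
    -- move to the Euclidean space to use orthogonal complements
    let eL : EuclideanSpace ℂ (Fin n) ≃ₗ[ℂ] (Fin n → ℂ) := WithLp.linearEquiv 2 ℂ (Fin n → ℂ)
    let K : Submodule ℂ (EuclideanSpace ℂ (Fin n)) :=
      Submodule.map (eL.symm : (Fin n → ℂ) →ₗ[ℂ] EuclideanSpace ℂ (Fin n))
        (LinearMap.ker T.mulVecLin)
    have hKfr : Module.finrank ℂ K = n - r := by
      rw [LinearEquiv.finrank_map_eq, hfr]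
    have hKofr : Module.finrank ℂ Kᗮ = r := by
      have h1 := Submodule.finrank_add_finrank_orthogonal K
      rw [hKfr, finrank_euclideanSpace_fin] at h1
      omega
    have hKmem : ∀ u : EuclideanSpace ℂ (Fin n), u ∈ K ↔ T *ᵥ (eL u) = 0 := by
      intro u
      constructor
      · rintro ⟨x, hx, rfl⟩
        have hx' : T.mulVecLin x = 0 := hx
        rw [Matrix.mulVecLin_apply] at hx'
        have h9 : eL ((eL.symm : (Fin n → ℂ) →ₗ[ℂ] EuclideanSpace ℂ (Fin n)) x) = x :=
          eL.apply_symm_apply x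
        rw [h9]
        exact hx'
      · intro h
        refine ⟨eL u, ?_, eL.symm_apply_apply u⟩
        show T.mulVecLin (eL u) = 0
        rw [Matrix.mulVecLin_apply]
        exact h
    have hinner : ∀ (u : EuclideanSpace ℂ (Fin n)) (v : Fin n → ℂ),
        (inner ℂ u (eL.symm v) : ℂ) = ∑ i : Fin n, (starRingEnd ℂ) ((eL u) i) * v i := by
      intro u v
      rw [PiLp.inner_apply]
      simp only [RCLike.inner_apply']
      rfl
    have hwK : ∀ a, eL.symm (w a) ∈ Kᗮ := by
      intro a
      rw [Submodule.mem_orthogonal]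
      intro u hu
      rw [hKmem] at hu
      obtain ⟨q, hqd, hxe⟩ := hdiv (eL u) hu
      rw [hinner, hxe]
      have hdeg : (q * c).natDegree < n := by
        have h1 : (q * c).natDegree ≤ q.natDegree + c.natDegree := Polynomial.natDegree_mul_le
        omega
      have h2 : ∑ i : Fin n, (q * c).coeff (i : ℕ) * (lam a) ^ (i : ℕ) = (q * c).eval (lam a) := by
        rw [Polynomial.eval_eq_sum_range' hdeg]
        rw [← Fin.sum_univ_eq_sum_range (fun i => (q * c).coeff i * (lam a) ^ i)]
      have h3 : (q * c).eval (lam a) = 0 := by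
        rw [Polynomial.eval_mul, hlamroot a, mul_zero]
      calc ∑ i : Fin n, (starRingEnd ℂ) (CF.vecL n (q * c) i) * w a i
          = (starRingEnd ℂ) (∑ i : Fin n, (q * c).coeff (i : ℕ) * (lam a) ^ (i : ℕ)) := by
            rw [map_sum]
            refine Finset.sum_congr rfl fun i _ => ?_
            rw [CF.vecL_apply]
            show (starRingEnd ℂ) ((q * c).coeff (i : ℕ)) * (starRingEnd ℂ) (lam a) ^ (i : ℕ) = _
            rw [← map_pow, ← _root_.map_mul]
        _ = 0 := by rw [h2, h3, map_zero]
    have hliE : LinearIndependent ℂ (fun a => eL.symm (w a)) :=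
      hli.map' eL.symm.toLinearMap eL.symm.ker
    have hspan : Submodule.span ℂ (Set.range fun a => eL.symm (w a)) = Kᗮ := by
      apply Submodule.eq_of_le_of_finrank_le
      · rw [Submodule.span_le]
        rintro _ ⟨a, rfl⟩
        exact hwK a
      · rw [finrank_span_eq_card hliE, Fintype.card_fin, hKofr]
    have hcol : ∀ j : Fin n, (fun i => T i j) ∈ Submodule.span ℂ (Set.range w) := by
      intro j
      have h0 : eL.symm (fun i => T i j) ∈ Kᗮ := by
        rw [Submodule.mem_orthogonal]
        intro u hu
        rw [hKmem] at hu
        rw [hinner]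
        have h2 : star (eL u) ᵥ* T = 0 := by
          have h3 : star (T *ᵥ (eL u)) = star (eL u) ᵥ* Tᴴ := Matrix.star_mulVec T (eL u)
          rw [hPSD.1] at h3
          rw [← h3, hu, star_zero]
        have h4 : (∑ i : Fin n, (starRingEnd ℂ) (eL u i) * T i j) = (star (eL u) ᵥ* T) j := by
          rw [Matrix.vecMul, dotProduct]
          rfl
        rw [h4, h2]
        rfl
      have h5 : Kᗮ = Submodule.map (eL.symm : (Fin n → ℂ) →ₗ[ℂ] EuclideanSpace ℂ (Fin n))
          (Submodule.span ℂ (Set.range w)) := by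
        rw [← hspan, Submodule.map_span]
        congr 1
        rw [← Set.range_comp]
        rfl
      rw [h5, Submodule.mem_map] at h0
      obtain ⟨y, hy, hyy⟩ := h0
      have h6 : y = (fun i => T i j) := eL.symm.injective hyy
      rwa [← h6]
    -- build the coefficient matrix M with T = W * M
    let W : Matrix (Fin n) (Fin r) ℂ := fun i a => w a i
    have hM : ∀ j : Fin n, ∃ m : Fin r → ℂ, ∑ a, m a • w a = (fun i => T i j) :=
      fun j => (Submodule.mem_span_range_iff_exists_fun ℂ).mp (hcol j)
    choose Mv hMv using hM
    let M : Matrix (Fin r) (Fin n) ℂ := fun a j => Mv j a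
    have hTWM : T = W * M := by
      ext i j
      rw [Matrix.mul_apply]
      have h1 := congrFun (hMv j) i
      simp only [Finset.sum_apply, Pi.smul_apply, smul_eq_mul] at h1
      rw [← h1]
      exact Finset.sum_congr rfl fun a _ => (mul_comm _ _)
    -- left inverse of W
    let EE : Matrix (Fin r) (Fin n) ℂ := fun a j => if Fin.castLE hrle a = j then 1 else 0
    have hEW : EE * W = Vsq := by
      ext a b
      rw [Matrix.mul_apply, Finset.sum_eq_single (Fin.castLE hrle a)]
      · simp only [EE, if_pos rfl, one_mul]
        rfl
      · intro j _ hj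
        simp only [EE]
        rw [if_neg (fun h => hj h.symm), zero_mul]
      · intro h; exact absurd (Finset.mem_univ _) h
    let L : Matrix (Fin r) (Fin n) ℂ := Vsq⁻¹ * EE
    have hLW : L * W = 1 := by
      show Vsq⁻¹ * EE * W = 1
      rw [Matrix.mul_assoc, hEW, Matrix.nonsing_inv_mul _ hdetU]
    have hWL : Wᴴ * Lᴴ = 1 := by
      rw [← Matrix.conjTranspose_mul, hLW, Matrix.conjTranspose_one]
    have hTM2 : T = Mᴴ * Wᴴ := by
      conv_lhs => rw [← hPSD.1, hTWM]
      rw [Matrix.conjTranspose_mul]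
    let Q : Matrix (Fin r) (Fin r) ℂ := L * T * Lᴴ
    have hLT : L * T = M := by
      rw [hTWM, ← Matrix.mul_assoc, hLW, Matrix.one_mul]
    have hQM : Q = M * Lᴴ := by
      show L * T * Lᴴ = M * Lᴴ
      rw [hLT]
    have hTQ : T = W * Q * Wᴴ := by
      rw [hQM]
      refine Eq.symm ?_
      calc W * (M * Lᴴ) * Wᴴ
          = W * M * Lᴴ * Wᴴ := by rw [Matrix.mul_assoc W M Lᴴ]
        _ = T * Lᴴ * Wᴴ := by rw [← hTWM]
        _ = Mᴴ * Wᴴ * Lᴴ * Wᴴ := by rw [← hTM2]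
        _ = Mᴴ * (Wᴴ * Lᴴ) * Wᴴ := by rw [Matrix.mul_assoc Mᴴ Wᴴ Lᴴ]
        _ = Mᴴ * Wᴴ := by rw [hWL, Matrix.mul_one]
        _ = T := hTM2.symm
    have hWH : ∀ (b : Fin r) (j : Fin n), Wᴴ b j = (lam b) ^ (j : ℕ) := by
      intro b j
      rw [Matrix.conjTranspose_apply]
      show star ((starRingEnd ℂ) (lam b) ^ (j : ℕ)) = _
      rw [star_pow]
      rw [show star ((starRingEnd ℂ) (lam b)) = lam b from Complex.conj_conj (lam b)]
    have hTentry : ∀ i j : Fin n,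
        T i j = ∑ a, ∑ b, (starRingEnd ℂ) (lam a) ^ (i : ℕ) * Q a b * (lam b) ^ (j : ℕ) := by
      intro i j
      conv_lhs => rw [hTQ]
      simp only [Matrix.mul_apply, Finset.sum_mul]
      rw [Finset.sum_comm]
      refine Finset.sum_congr rfl fun a _ => Finset.sum_congr rfl fun b _ => ?_
      rw [hWH]
    have hQoff : ∀ a b, a ≠ b → Q a b = 0 := by
      set R : Matrix (Fin r) (Fin r) ℂ :=
        fun a b => Q a b * ((starRingEnd ℂ) (lam a) * lam b - 1) with hRdef
      have hzero : Vsq * (R * V2) = 0 := by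
        ext j k
        have hjn : (j : ℕ) + 1 < n := by omega
        have hkn : (k : ℕ) + 1 < n := by omega
        have hjn' : (j : ℕ) < n := by omega
        have hkn' : (k : ℕ) < n := by omega
        have hperterm : ∀ a b, Vsq j a * (R a b * V2 b k)
            = (starRingEnd ℂ) (lam a) ^ ((j : ℕ) + 1) * Q a b * lam b ^ ((k : ℕ) + 1)
              - (starRingEnd ℂ) (lam a) ^ (j : ℕ) * Q a b * lam b ^ (k : ℕ) := by
          intro a b
          show (starRingEnd ℂ) (lam a) ^ (j : ℕ)
              * (Q a b * ((starRingEnd ℂ) (lam a) * lam b - 1) * (lam b ^ (k : ℕ))) = _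
          rw [pow_succ, pow_succ]
          ring
        have hsum : (Vsq * (R * V2)) j k
            = (∑ a, ∑ b, (starRingEnd ℂ) (lam a) ^ ((j : ℕ) + 1) * Q a b * lam b ^ ((k : ℕ) + 1))
              - ∑ a, ∑ b, (starRingEnd ℂ) (lam a) ^ (j : ℕ) * Q a b * lam b ^ (k : ℕ) := by
          simp only [Matrix.mul_apply, Finset.mul_sum]
          rw [← Finset.sum_sub_distrib]
          refine Finset.sum_congr rfl fun a _ => ?_
          rw [← Finset.sum_sub_distrib]
          exact Finset.sum_congr rfl fun b _ => hperterm a b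
        have hT1 := hTentry ⟨(j : ℕ) + 1, hjn⟩ ⟨(k : ℕ) + 1, hkn⟩
        have hT2 := hTentry ⟨(j : ℕ), hjn'⟩ ⟨(k : ℕ), hkn'⟩
        have hTT : T ⟨(j : ℕ) + 1, hjn⟩ ⟨(k : ℕ) + 1, hkn⟩ = T ⟨(j : ℕ), hjn'⟩ ⟨(k : ℕ), hkn'⟩ :=
          hToep _ _ _ _ (by push_cast; omega)
        rw [Matrix.zero_apply]
        rw [hsum, ← hT1, ← hT2, hTT, sub_self]
      have hR0 : R = 0 := by
        have h1 : Vsq⁻¹ * (Vsq * (R * V2)) * V2⁻¹ = 0 := by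
          rw [hzero, Matrix.mul_zero, Matrix.zero_mul]
        rwa [← Matrix.mul_assoc Vsq⁻¹ Vsq (R * V2), Matrix.nonsing_inv_mul _ hdetU,
          Matrix.one_mul, Matrix.mul_assoc R V2 V2⁻¹, Matrix.mul_nonsing_inv _ hV2detU,
          Matrix.mul_one] at h1
      intro a b hab
      have h2 : Q a b * ((starRingEnd ℂ) (lam a) * lam b - 1) = 0 := by
        have := congrFun (congrFun hR0 a) b
        exact this
      have h3 : (starRingEnd ℂ) (lam a) * lam b - 1 ≠ 0 := by
        intro h4
        have h5 : (starRingEnd ℂ) (lam a) * lam b = 1 := sub_eq_zero.mp h4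
        have h6 : lam a * ((starRingEnd ℂ) (lam a) * lam b) = lam a * 1 := by rw [h5]
        rw [← mul_assoc, hlam1 a, one_mul, mul_one] at h6
        exact hab (hlaminj h6).symm
      rcases mul_eq_zero.mp h2 with h | h
      · exact h
      · exact absurd h h3
    set dQ : Fin r → ℂ := fun a => Q a a with hdQ
    have hQdiag : Q = Matrix.diagonal dQ := by
      ext a b
      by_cases hab : a = b
      · subst hab
        rw [Matrix.diagonal_apply_eq]
      · rw [Matrix.diagonal_apply_ne _ hab]
        exact hQoff a b hab
    have hQform : ∀ a, star (Lᴴ *ᵥ (Pi.single a 1 : Fin r → ℂ)) ⬝ᵥ T *ᵥ (Lᴴ *ᵥ (Pi.single a 1 : Fin r → ℂ)) = Q a a := by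
      intro a
      have h1 : T *ᵥ (Lᴴ *ᵥ (Pi.single a 1 : Fin r → ℂ)) = (T * Lᴴ) *ᵥ (Pi.single a 1 : Fin r → ℂ) :=
        Matrix.mulVec_mulVec _ _ _
      have h2 : star (Lᴴ *ᵥ (Pi.single a 1 : Fin r → ℂ)) = star ((Pi.single a 1 : Fin r → ℂ)) ᵥ* L := by
        rw [Matrix.star_mulVec, Matrix.conjTranspose_conjTranspose]
      have h4 : star ((Pi.single a 1 : Fin r → ℂ)) = Pi.single a 1 := by
        funext b
        by_cases hb : b = a
        · subst hb; simp
        · simp [Pi.single_eq_of_ne hb]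
      rw [h1, h2, h4, Matrix.dotProduct_mulVec, Matrix.vecMul_vecMul,
        ← Matrix.mul_assoc]
      show (Pi.single a 1 ᵥ* Q) ⬝ᵥ Pi.single a 1 = Q a a
      rw [Matrix.single_vecMul]
      simp [dotProduct, Pi.single_apply]
    have hQnn : ∀ a, (0 : ℂ) ≤ Q a a := by
      intro a
      rw [← hQform a]
      exact hPSD.dotProduct_mulVec_nonneg _
    have hQne : ∀ a, Q a a ≠ 0 := by
      intro a ha
      have h1 : T.rank ≤ (Matrix.diagonal dQ).rank := by
        calc T.rank = (W * Matrix.diagonal dQ * Wᴴ).rank := by rw [← hQdiag, ← hTQ]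
          _ ≤ (W * Matrix.diagonal dQ).rank := Matrix.rank_mul_le_left _ _
          _ ≤ (Matrix.diagonal dQ).rank := Matrix.rank_mul_le_right _ _
      rw [Matrix.rank_diagonal] at h1
      have h2 : Fintype.card {b // dQ b ≠ 0} ≤ Fintype.card {b : Fin r // ¬ (b = a)} := by
        apply Fintype.card_subtype_mono
        intro b hb hba
        exact hb (by rw [hba]; exact ha)
      have h3 : Fintype.card {b : Fin r // ¬ (b = a)} = r - 1 := by
        rw [Fintype.card_subtype_compl, Fintype.card_subtype_eq, Fintype.card_fin]
      omega
    let pv : Fin r → ℝ := fun a => (Q a a).re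
    have hQp : ∀ a, Q a a = ((pv a : ℝ) : ℂ) := by
      intro a
      have h1 := hQnn a
      rw [Complex.le_def] at h1
      apply Complex.ext
      · rfl
      · rw [Complex.ofReal_im]
        exact h1.2.symm
    have hppos : ∀ a, 0 < pv a := by
      intro a
      have h1 := hQnn a
      rw [Complex.le_def] at h1
      rcases lt_or_eq_of_le h1.1 with h | h
      · exact h
      · exfalso
        apply hQne a
        rw [hQp a]
        rw [Complex.ofReal_eq_zero]
        show (Q a a).re = 0
        exact h.symm
    refine ⟨ω, pv, hωinj, hω, hppos, ?_⟩
    ext i j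
    have hfinal : T i j = ∑ a, (pv a : ℂ) * (w a i * star (w a j)) := by
      conv_lhs => rw [hTQ, hQdiag]
      rw [Matrix.mul_apply]
      refine Finset.sum_congr rfl fun a _ => ?_
      rw [Matrix.mul_diagonal, Matrix.conjTranspose_apply, ← hQp a]
      show W i a * Q a a * star (W j a) = Q a a * (w a i * star (w a j))
      ring
    rw [hfinal, Matrix.sum_apply]
    refine Finset.sum_congr rfl fun a _ => ?_
    rw [Matrix.smul_apply, Matrix.vecMulVec_apply, hsteer a, Pi.star_apply, smul_eq_mul]
end

section
/- Let s, n ≥ 1, let ω_1, …, ω_s ∈ ℝ, let c_1, …, c_s be nonnegative real numbers, and set x = Σ_{k=1}^s c_k a_n(ω_k) ∈ ℂ^n, u_j = Σ_{k=1}^s c_k e^{−i ω_k j} for j = 0, …, n−1, and t = Σ_{k=1}^s c_k. Let T(u) be the Hermitian Toeplitz matrix generated by u, namely T(u)_{jk} = u_{j−k} if j ≥ k and T(u)_{jk} = conj(u_{k−j}) if j < k. Then the (n+1)×(n+1) block matrix [[T(u), x],[xᴴ, t]] is positive semidefinite. -/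
open Matrix
open scoped ComplexOrder

/-- Hermitian Toeplitz matrix generated by `u`: `T(u)_{jk} = u_{j−k}` for `j ≥ k`
and `T(u)_{jk} = conj (u_{k−j})` for `j < k`. -/
noncomputable def toepGen (n : ℕ) (u : Fin n → ℂ) : Matrix (Fin n) (Fin n) ℂ :=
  Matrix.of fun j k : Fin n =>
    if (k : ℕ) ≤ (j : ℕ) then
      u ⟨(j : ℕ) - (k : ℕ), Nat.lt_of_le_of_lt (Nat.sub_le _ _) j.isLt⟩
    else star (u ⟨(k : ℕ) - (j : ℕ), Nat.lt_of_le_of_lt (Nat.sub_le _ _) k.isLt⟩)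

/-- The `(n+1)×(n+1)` block matrix `[[T(u), x], [xᴴ, t]]`. -/
noncomputable def blockZ (n : ℕ) (u x : Fin n → ℂ) (t : ℝ) :
    Matrix (Fin n ⊕ Unit) (Fin n ⊕ Unit) ℂ :=
  Matrix.fromBlocks (toepGen n u) (Matrix.of fun i _ => x i)
    (Matrix.of fun _ j => star (x j)) (Matrix.of fun _ _ => (t : ℂ))

lemma vecMulVec_star_posSemidef {m : Type*} [Fintype m] (w : m → ℂ) :
    (Matrix.vecMulVec w (star w)).PosSemidef := by
  rw [Matrix.vecMulVec_eq (Fin 1), ← Matrix.conjTranspose_replicateCol]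
  exact Matrix.posSemidef_self_mul_conjTranspose _

/-- **Feasibility of atomic decompositions in the SDP characterizing the atomic norm.**
For nonnegative weights `c_k`, with `x = Σ_k c_k a_n(ω_k)`,
`u_j = Σ_k c_k e^{−i ω_k j}` and `t = Σ_k c_k`, the block matrix
`[[T(u), x], [xᴴ, t]]` is positive semidefinite. -/
theorem atomic_decomposition_feasible
    (s n : ℕ) (hs : 1 ≤ s) (hn : 1 ≤ n)
    (ω : Fin s → ℝ) (c : Fin s → ℝ) (hc : ∀ k, 0 ≤ c k)
    (x : Fin n → ℂ) (hx : x = ∑ k, (c k : ℂ) • steer n (ω k))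
    (u : Fin n → ℂ)
    (hu : ∀ j : Fin n, u j = ∑ k, (c k : ℂ) * Complex.exp (-Complex.I * (ω k) * ((j : ℕ) : ℝ)))
    (t : ℝ) (ht : t = ∑ k, c k) :
    (blockZ n u x t).PosSemidef := by
  set v : Fin s → (Fin n ⊕ Unit) → ℂ :=
    fun k => Sum.elim (steer n (ω k)) (fun _ => (1 : ℂ)) with hv
  set w : Fin s → (Fin n ⊕ Unit) → ℂ :=
    fun k => ((Real.sqrt (c k) : ℝ) : ℂ) • v k with hw
  have hsq : ∀ k, ((Real.sqrt (c k) : ℝ) : ℂ) * ((Real.sqrt (c k) : ℝ) : ℂ) = (c k : ℂ) := by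
    intro k
    rw [← Complex.ofReal_mul, Real.mul_self_sqrt (hc k)]
  have key : blockZ n u x t = ∑ k, Matrix.vecMulVec (w k) (star (w k)) := by
    ext i j
    have hrhs : (∑ k, Matrix.vecMulVec (w k) (star (w k))) i j
        = ∑ k, (c k : ℂ) * (v k i * star (v k j)) := by
      rw [Matrix.sum_apply]
      refine Finset.sum_congr rfl fun k _ => ?_
      simp only [Matrix.vecMulVec_apply, hw, Pi.smul_apply, Pi.star_apply, smul_eq_mul,
        star_mul', Complex.star_def, Complex.conj_ofReal]
      rw [← hsq k]; ring
    rw [hrhs]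
    rcases i with a | _ <;> rcases j with b | _
    · -- Toeplitz block
      simp only [blockZ, Matrix.fromBlocks_apply₁₁, toepGen, Matrix.of_apply, hv, Sum.elim_inl]
      by_cases hba : (b : ℕ) ≤ (a : ℕ)
      · rw [if_pos hba, hu]
        refine Finset.sum_congr rfl fun k _ => ?_
        congr 1
        simp only [steer, Complex.star_def, ← Complex.exp_conj, ← Complex.exp_add]
        congr 1
        simp only [_root_.map_mul, map_neg, Complex.conj_I, Complex.conj_ofReal,
          Complex.conj_natCast]
        push_cast [Nat.cast_sub hba]
        ring
      · rw [if_neg hba]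
        push_neg at hba
        rw [hu]
        rw [star_sum]
        refine Finset.sum_congr rfl fun k _ => ?_
        simp only [steer, Complex.star_def, _root_.map_mul, Complex.conj_ofReal,
          ← Complex.exp_conj, ← Complex.exp_add]
        congr 2
        simp only [_root_.map_mul, map_neg, map_add, Complex.conj_I, Complex.conj_ofReal,
          Complex.conj_natCast]
        push_cast [Nat.cast_sub hba.le]
        ring
    · -- x column
      simp only [blockZ, Matrix.fromBlocks_apply₁₂, Matrix.of_apply, hv, Sum.elim_inl,
        Sum.elim_inr, star_one, mul_one, hx]
      rw [Finset.sum_apply]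
      simp [mul_comm]
    · -- xᴴ row
      simp only [blockZ, Matrix.fromBlocks_apply₂₁, Matrix.of_apply, hv, Sum.elim_inl,
        Sum.elim_inr, one_mul, hx]
      rw [Finset.sum_apply, star_sum]
      refine Finset.sum_congr rfl fun k _ => ?_
      simp only [Pi.smul_apply, smul_eq_mul, star_mul', Complex.star_def, Complex.conj_ofReal]
      try ring
    · -- scalar t
      simp only [blockZ, Matrix.fromBlocks_apply₂₂, Matrix.of_apply, hv, Sum.elim_inr,
        star_one, mul_one, ht]
      push_cast
      try rfl
      try ring
      try simp
  rw [key]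
  refine Finset.sum_induction _ Matrix.PosSemidef (fun A B hA hB => hA.add hB)
    Matrix.PosSemidef.zero (fun k _ => vecMulVec_star_posSemidef (w k))
end
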